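/- arXiv:2604.26792 — 3 statements merged into one kernel-verified Lean document; each statement's English description precedes it below -/
import Mathlib

section
/- For integers d ≥ 2, any diagonal unitary U = Σ_{n=0}^{d-1} e^{-iβ_n} |n⟩⟨n| on C^d can be written, up to a global phase e^{-i β̄} where β̄ = (1/d) Σ_n β_n, as a product of d-1 commuting adjacent two-level Z-rotations: U = e^{-i β̄} Π_{k=0}^{d-2} R_Z^{(k,k+1)}(θ_k) with θ_k = 2 Σ_{n=0}^{k} (β_n − β̄). -/
open Complex Finset

/-- Embedded two-level Z rotation on `ℂ^d`: acts as `e^{-iθ/2}` on `|b⟩`,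
`e^{+iθ/2}` on `|c⟩`, and identity elsewhere. -/
noncomputable def RZ (d : ℕ) (b c : Fin d) (θ : ℝ) : Matrix (Fin d) (Fin d) ℂ :=
  Matrix.diagonal (fun n =>
    if n = b then Complex.exp (-Complex.I * θ / 2)
    else if n = c then Complex.exp (Complex.I * θ / 2) else 1)

lemma diag_list_prod {d m : ℕ} (f : Fin m → Fin d → ℂ) :
    (List.ofFn (fun k => Matrix.diagonal (f k))).prod
      = Matrix.diagonal (fun n => ∏ k, f k n) := by
  induction m with
  | zero => simp [Matrix.diagonal_one]
  | succ m ih =>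
    rw [List.ofFn_succ, List.prod_cons, ih (fun k => f k.succ)]
    rw [Matrix.diagonal_mul_diagonal]
    simp [Fin.prod_univ_succ]

/-- Any diagonal unitary `U = Σ e^{-iβ_n}|n⟩⟨n|` equals the global phase
`e^{-iβ̄}` times the product of the `d-1` adjacent two-level Z-rotations with
angles `θ_k = 2 Σ_{n≤k} (β_n - β̄)`. -/
theorem stmt0 (d : ℕ) (hd : 2 ≤ d) (β : ℕ → ℝ) :
    Matrix.diagonal (fun n : Fin d => Complex.exp (-Complex.I * (β n : ℂ)))
      =
    Complex.exp (-Complex.I * ((((∑ n ∈ Finset.range d, β n) / d : ℝ)) : ℂ)) •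
      (List.ofFn (fun k : Fin (d - 1) =>
        RZ d ⟨k.1, by have := k.2; omega⟩ ⟨k.1 + 1, by have := k.2; omega⟩
          (2 * ∑ n ∈ Finset.range (k.1 + 1),
            (β n - (∑ m ∈ Finset.range d, β m) / d)))).prod := by
  set βbar : ℝ := (∑ m ∈ Finset.range d, β m) / d with hβbar
  set T : ℕ → ℝ := fun k => ∑ n ∈ Finset.range (k + 1), (β n - βbar) with hT
  have hd0 : (d : ℝ) ≠ 0 := by positivity
  have hTtot : ∑ n ∈ Finset.range d, (β n - βbar) = 0 := by
    rw [Finset.sum_sub_distrib, Finset.sum_const, Finset.card_range]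
    rw [hβbar, nsmul_eq_mul]; field_simp; ring
  unfold RZ
  rw [diag_list_prod]
  rw [← Matrix.diagonal_smul]
  refine congrArg Matrix.diagonal (funext fun n => ?_)
  simp only [Pi.smul_apply, smul_eq_mul]
  -- rewrite each factor as exp of something
  have hfac : ∀ k : Fin (d - 1),
      (if n = (⟨k.1, by have := k.2; omega⟩ : Fin d) then
        Complex.exp (-Complex.I * (2 * T k.1 : ℝ) / 2)
      else if n = (⟨k.1 + 1, by have := k.2; omega⟩ : Fin d) then
        Complex.exp (Complex.I * (2 * T k.1 : ℝ) / 2) else 1)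
      = Complex.exp (if (n : ℕ) = k.1 then -Complex.I * (T k.1 : ℝ)
          else if (n : ℕ) = k.1 + 1 then Complex.I * (T k.1 : ℝ) else 0) := by
    intro k
    have h1 : (n = (⟨k.1, by have := k.2; omega⟩ : Fin d)) ↔ (n : ℕ) = k.1 := by
      rw [Fin.ext_iff]
    have h2 : (n = (⟨k.1 + 1, by have := k.2; omega⟩ : Fin d)) ↔ (n : ℕ) = k.1 + 1 := by
      rw [Fin.ext_iff]
    simp only [h1, h2]
    split_ifs with hA hB
    · push_cast; ring_nf
    · push_cast; ring_nf
    · simp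
  simp only [hT] at hfac
  simp only [hfac]
  rw [← Complex.exp_sum, ← Complex.exp_add]
  congr 1
  rw [Fin.sum_univ_eq_sum_range
    (fun k => if (n : ℕ) = k then -Complex.I * (T k : ℝ)
      else if (n : ℕ) = k + 1 then Complex.I * (T k : ℝ) else 0)]
  have hsplit : ∀ k ∈ Finset.range (d - 1),
      (if (n : ℕ) = k then -Complex.I * (T k : ℝ)
        else if (n : ℕ) = k + 1 then Complex.I * (T k : ℝ) else 0)
      = (if k = (n : ℕ) then -Complex.I * (T k : ℝ) else 0)
        + (if k = (n : ℕ) - 1 ∧ 1 ≤ (n : ℕ) then Complex.I * (T k : ℝ) else 0) := by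
    intro k _
    split_ifs <;> first | ring1 | omega
  rw [Finset.sum_congr rfl hsplit, Finset.sum_add_distrib]
  rw [Finset.sum_ite_eq' (Finset.range (d - 1)) (n : ℕ)
    (fun k => -Complex.I * (T k : ℝ))]
  have hn := n.2
  by_cases h1 : 1 ≤ (n : ℕ)
  · simp only [h1, and_true]
    rw [Finset.sum_ite_eq' (Finset.range (d - 1)) ((n : ℕ) - 1)
      (fun k => Complex.I * (T k : ℝ))]
    by_cases h2 : (n : ℕ) < d - 1
    · have hm1 : (n : ℕ) ∈ Finset.range (d - 1) := Finset.mem_range.2 h2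
      have hm2 : (n : ℕ) - 1 ∈ Finset.range (d - 1) := Finset.mem_range.2 (by omega)
      simp only [hm1, hm2, if_true]
      have hstep : T (n : ℕ) = T ((n : ℕ) - 1) + (β (n : ℕ) - βbar) := by
        obtain ⟨j, hj⟩ : ∃ j, (n : ℕ) = j + 1 := ⟨(n : ℕ) - 1, by omega⟩
        simp only [hT, hj, Nat.add_sub_cancel]
        exact Finset.sum_range_succ _ _
      rw [hstep]; push_cast; ring
    · have hnd : (n : ℕ) = d - 1 := by omega
      have hm1 : (n : ℕ) ∉ Finset.range (d - 1) := by simp [hnd]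
      have hm2 : (n : ℕ) - 1 ∈ Finset.range (d - 1) := Finset.mem_range.2 (by omega)
      simp only [hm1, hm2, if_true, if_false]
      have hds : ((n : ℕ) - 1) + 1 = d - 1 := by omega
      have hβn : β (n : ℕ) = β (d - 1) := by rw [hnd]
      have hsum : ∑ m ∈ Finset.range d, (β m - βbar)
          = (∑ m ∈ Finset.range (d - 1), (β m - βbar)) + (β (d - 1) - βbar) := by
        have hd1 : d = (d - 1) + 1 := by omega
        conv_lhs => rw [hd1, Finset.sum_range_succ]
      have hTd : T ((n : ℕ) - 1) = ∑ m ∈ Finset.range (d - 1), (β m - βbar) := by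
        simp only [hT]
        rw [hds]
      have hlast : T ((n : ℕ) - 1) = -(β (n : ℕ) - βbar) := by
        rw [hβn]; linarith [hTtot, hsum, hTd]
      rw [hlast]; push_cast; ring
  · have hn0 : (n : ℕ) = 0 := by omega
    have hm1 : (n : ℕ) ∈ Finset.range (d - 1) := Finset.mem_range.2 (by omega)
    simp only [h1, and_false, if_false, hm1, if_true, Finset.sum_const_zero, add_zero]
    have hT0 : T (n : ℕ) = β (n : ℕ) - βbar := by
      rw [hT, hn0]; simp
    rw [hT0]; push_cast; ring
end

section
/- Let d = 2M+1 be odd with M ≥ 1, φ_max > 0, and λ_n, μ as in the uniform symmetric digitization. Then for every k ∈ {0,…,d−2}, the centered partial sum Σ_{n=0}^{k} (λ_n² − μ) is nonzero. -/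
open Finset

lemma sumsq_aux (M : ℕ) : ∀ m : ℕ, ∑ n ∈ Finset.range m, ((n : ℝ) - M) ^ 2
    = (m : ℝ) * (m - 1) * (2 * m - 1) / 6 - M * m * (m - 1) + m * (M : ℝ) ^ 2 := by
  intro m
  induction m with
  | zero => simp
  | succ m ih =>
    rw [Finset.sum_range_succ, ih]
    push_cast
    ring

/-- the centered partial sums of the squared eigenvalues of the
uniform symmetric field digitization are nonzero for every `k ∈ {0,…,d-2}`. -/
theorem stmt3 (M : ℕ) (hM : 1 ≤ M) (φmax : ℝ) (hφ : 0 < φmax)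
    (d : ℕ) (hd : d = 2 * M + 1)
    (lam : ℕ → ℝ) (hlam : ∀ n, lam n = -φmax + n * (2 * φmax / ((d : ℝ) - 1)))
    (μ : ℝ) (hμ : μ = (∑ n ∈ Finset.range d, (lam n) ^ 2) / d) :
    ∀ k : ℕ, k ≤ d - 2 →
      ∑ n ∈ Finset.range (k + 1), ((lam n) ^ 2 - μ) ≠ 0 := by
  intro k hk
  have hM0 : (M : ℝ) ≠ 0 := by
    have : (1 : ℝ) ≤ (M : ℝ) := by exact_mod_cast hM
    linarith
  have hMpos : (0 : ℝ) < (M : ℝ) := by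
    have : (1 : ℝ) ≤ (M : ℝ) := by exact_mod_cast hM
    linarith
  have hdr : (d : ℝ) = 2 * M + 1 := by rw [hd]; push_cast; ring
  set c : ℝ := 2 * φmax / (2 * M) with hc
  have hcpos : 0 < c := by
    apply div_pos <;> linarith
  have hlamc : ∀ n : ℕ, lam n = c * ((n : ℝ) - M) := by
    intro n
    rw [hlam, hdr, hc]
    field_simp
    ring
  have hlam2 : ∀ n : ℕ, lam n ^ 2 = c ^ 2 * ((n : ℝ) - M) ^ 2 := by
    intro n; rw [hlamc]; ring
  have hsum : ∀ m : ℕ, ∑ n ∈ Finset.range m, lam n ^ 2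
      = c ^ 2 * ((m : ℝ) * (m - 1) * (2 * m - 1) / 6 - M * m * (m - 1) + m * (M : ℝ) ^ 2) := by
    intro m
    rw [← sumsq_aux M m, Finset.mul_sum]
    exact Finset.sum_congr rfl fun n _ => hlam2 n
  have hd0 : (d : ℝ) ≠ 0 := by rw [hdr]; positivity
  have hS : ∑ n ∈ Finset.range (k + 1), ((lam n) ^ 2 - μ)
      = c ^ 2 * (((k : ℝ) + 1) * ((k : ℝ) - 2 * M) * (2 * k + 1 - 2 * M)) / 6 := by
    rw [Finset.sum_sub_distrib, Finset.sum_const, Finset.card_range, hsum, hμ, hsum, hdr]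
    push_cast
    field_simp
    ring
  rw [hS]
  have hk1 : (0 : ℝ) < (k : ℝ) + 1 := by positivity
  have hk2M : k < 2 * M := by omega
  have h2 : (k : ℝ) - 2 * M < 0 := by
    have : (k : ℝ) < 2 * M := by exact_mod_cast hk2M
    linarith
  have h3 : (2 * (k : ℝ) + 1 - 2 * M) ≠ 0 := by
    have hne : (2 * k + 1 : ℕ) ≠ 2 * M := by omega
    intro h
    apply hne
    have h' : (2 * (k : ℝ) + 1) = 2 * M := by linarith
    exact_mod_cast h'
  have hc2 : c ^ 2 ≠ 0 := by positivity
  exact div_ne_zero (mul_ne_zero hc2 (mul_ne_zero (mul_ne_zero (ne_of_gt hk1)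
    (ne_of_lt h2)) h3)) (by norm_num)
end

section
/- For the uniform symmetric grid λ_n = −φ_max + (2φ_max/(d−1))·n, n = 0,…,d−1, with d odd and ω = e^{2πi/d}, the discrete Fourier coefficients β_r = (1/d) Σ_{n=0}^{d−1} λ_n² ω^{−rn} satisfy β_0 = φ_max² (d+1)/(3(d−1)) and, for r = 1,…,d−1, β_r = (2φ_max²/(d−1)²) · e^{iπr/d} · cos(πr/d)/sin²(πr/d). -/
open Finset Complex

lemma stmt5_aux1 (d : ℕ) (z : ℂ) :
    (z - 1)^2 * ∑ n ∈ Finset.range d, (n:ℂ) * z^n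
      = ((d:ℂ) - 1) * z^(d+1) - (d:ℂ) * z^d + z := by
  induction d with
  | zero => simp
  | succ k ih =>
    rw [Finset.sum_range_succ, mul_add, ih]
    push_cast
    ring

lemma stmt5_aux2 (d : ℕ) (z : ℂ) :
    (z - 1)^3 * ∑ n ∈ Finset.range d, (n:ℂ)^2 * z^n
      = (((d:ℂ) - 1)^2 * z^2 - (2*(d:ℂ)^2 - 2*(d:ℂ) - 1) * z + (d:ℂ)^2) * z^d
        - z^2 - z := by
  induction d with
  | zero => simp
  | succ k ih =>
    rw [Finset.sum_range_succ, mul_add, ih]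
    push_cast
    ring

lemma stmt5_gauss1 (d : ℕ) : ∑ n ∈ Finset.range d, (n:ℂ) = (d:ℂ) * ((d:ℂ) - 1) / 2 := by
  induction d with
  | zero => simp
  | succ k ih => rw [Finset.sum_range_succ, ih]; push_cast; ring

lemma stmt5_gauss2 (d : ℕ) :
    ∑ n ∈ Finset.range d, (n:ℂ)^2 = (d:ℂ) * ((d:ℂ) - 1) * (2*(d:ℂ) - 1) / 6 := by
  induction d with
  | zero => simp
  | succ k ih => rw [Finset.sum_range_succ, ih]; push_cast; ring

lemma stmt5_algfinal (D c u : ℂ) (hD : D ≠ 0) (hu : u ≠ 0) (hDm : D - 1 ≠ 0)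
    (h1 : u⁻¹^2 - 1 ≠ 0) (h2 : u - u⁻¹ ≠ 0) (h3 : u^2 - 1 ≠ 0) :
    D * (4*c) * (1 - (u⁻¹^2)^2) / ((D-1)^2 * ((u⁻¹^2 - 1)^3 * D))
      = 2*c/(D-1)^2 * u * ((u + u⁻¹)/2 / (-(((u - u⁻¹)/2)^2))) := by
  have e1 : u * u⁻¹ = 1 := mul_inv_cancel₀ hu
  have key1 : D * (4*c) * (1 - (u⁻¹^2)^2) / ((D-1)^2 * ((u⁻¹^2 - 1)^3 * D))
      = (-(4*c) * (u^2 * (u^2 + 1))) / ((D-1)^2 * (u^2 - 1)^2) := by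
    rw [div_eq_div_iff
      (mul_ne_zero (pow_ne_zero 2 hDm) (mul_ne_zero (pow_ne_zero 3 h1) hD))
      (mul_ne_zero (pow_ne_zero 2 hDm) (pow_ne_zero 2 h3))]
    linear_combination ((4:ℂ)*c*D*(D-1)^2 * (-1 + u⁻¹^4 - u*u⁻¹ + u*u⁻¹^5 + 3*u^2
      - 4*u^2*u⁻¹^2 + u^2*u⁻¹^4 + 3*u^3*u⁻¹ - 4*u^3*u⁻¹^3 + u^3*u⁻¹^5)) * e1
  have key2a' : ∀ t : ℂ, t ≠ 0 → 2*c/(D-1)^2 * u * ((u + u⁻¹)/2 / (-((t/2)^2)))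
      = (-(4*c) * (u*(u+u⁻¹))) / ((D-1)^2 * t^2) := by
    intro t ht
    field_simp
    ring
  have key2a := key2a' (u - u⁻¹) h2
  have key2b : (-(4*c) * (u*(u+u⁻¹))) / ((D-1)^2 * (u - u⁻¹)^2)
      = (-(4*c) * (u^2 * (u^2 + 1))) / ((D-1)^2 * (u^2 - 1)^2) := by
    rw [div_eq_div_iff
      (mul_ne_zero (pow_ne_zero 2 hDm) (pow_ne_zero 2 h2))
      (mul_ne_zero (pow_ne_zero 2 hDm) (pow_ne_zero 2 h3))]
    linear_combination ((4:ℂ)*c*(D-1)^2 * (u*u⁻¹ + u^2 + u^3*u⁻¹ - 3*u^4)) * e1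
  rw [key1, key2a, key2b]

/-- explicit values of the discrete Fourier coefficients of the
squared uniform symmetric grid `λ_n = -φ_max + (2φ_max/(d-1)) n`. -/
theorem stmt5 (d : ℕ) (hd : 3 ≤ d) (hodd : Odd d) (φmax : ℝ) (hφ : 0 < φmax)
    (lam : ℕ → ℝ) (hlam : ∀ n, lam n = -φmax + (2 * φmax / ((d : ℝ) - 1)) * n)
    (β : ℕ → ℂ)
    (hβ : ∀ r, β r = (1 / (d : ℂ)) * ∑ n ∈ Finset.range d,
      ((lam n : ℂ)) ^ 2 * Complex.exp (-(2 * (Real.pi : ℂ) * Complex.I * r * n) / d)) :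
    β 0 = ((φmax ^ 2 * ((d : ℝ) + 1) / (3 * ((d : ℝ) - 1)) : ℝ) : ℂ)
    ∧ ∀ r, 1 ≤ r → r ≤ d - 1 →
        β r = ((2 * φmax ^ 2 / ((d : ℝ) - 1) ^ 2 : ℝ) : ℂ)
                * Complex.exp ((Real.pi : ℂ) * Complex.I * r / d)
                * ((Real.cos (Real.pi * r / d) / (Real.sin (Real.pi * r / d)) ^ 2 : ℝ) : ℂ) := by
  have hd0 : (d:ℂ) ≠ 0 := Nat.cast_ne_zero.mpr (by omega)
  have hd1 : (d:ℂ) - 1 ≠ 0 := sub_ne_zero_of_ne (by exact_mod_cast (by omega : d ≠ 1))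
  have hd1R : (d:ℝ) - 1 ≠ 0 := sub_ne_zero_of_ne (by exact_mod_cast (by omega : d ≠ 1))
  have hlc : ∀ n : ℕ, ((d:ℂ) - 1) * ((lam n : ℝ) : ℂ)
      = -((d:ℂ)-1) * (φmax:ℂ) + 2 * (φmax:ℂ) * n := by
    intro n; rw [hlam n]; push_cast; field_simp
  constructor
  · -- β 0
    have h0 := hβ 0
    have hterm : ∀ n ∈ Finset.range d,
        ((lam n : ℂ)) ^ 2 * Complex.exp (-(2 * (Real.pi : ℂ) * Complex.I * (0:ℕ) * n) / d)
          = ((lam n : ℂ)) ^ 2 := by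
      intro n _; norm_num
    rw [Finset.sum_congr rfl hterm] at h0
    have expand : ((d:ℂ) - 1)^2 * ∑ n ∈ Finset.range d, ((lam n : ℂ)) ^ 2
        = (-((d:ℂ)-1) * (φmax:ℂ))^2 * (d:ℂ)
          + 2 * (-((d:ℂ)-1) * (φmax:ℂ)) * (2 * (φmax:ℂ)) * ((d:ℂ) * ((d:ℂ) - 1) / 2)
          + (2 * (φmax:ℂ))^2 * ((d:ℂ) * ((d:ℂ) - 1) * (2*(d:ℂ) - 1) / 6) := by
      rw [Finset.mul_sum]
      rw [Finset.sum_congr rfl (fun n _ => show ((d:ℂ)-1)^2 * ((lam n : ℂ))^2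
          = (-((d:ℂ)-1) * (φmax:ℂ))^2 + 2 * (-((d:ℂ)-1) * (φmax:ℂ)) * (2 * (φmax:ℂ)) * (n:ℂ)
            + (2 * (φmax:ℂ))^2 * (n:ℂ)^2 from by
        linear_combination (((d:ℂ) - 1) * ((lam n : ℝ) : ℂ)
          + (-((d:ℂ)-1) * (φmax:ℂ) + 2 * (φmax:ℂ) * n)) * hlc n)]
      rw [Finset.sum_add_distrib, Finset.sum_add_distrib, Finset.sum_const, Finset.card_range,
        ← Finset.mul_sum, ← Finset.mul_sum, stmt5_gauss1, stmt5_gauss2]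
      ring
    have hsum : ∑ n ∈ Finset.range d, ((lam n : ℂ)) ^ 2
        = (φmax:ℂ)^2 * (d:ℂ) * ((d:ℂ)+1) / (3*((d:ℂ)-1)) := by
      apply mul_left_cancel₀ (pow_ne_zero 2 hd1)
      rw [expand]; field_simp; ring
    rw [h0, hsum]
    push_cast
    field_simp
  · -- β r, 1 ≤ r ≤ d-1
    intro r hr1 hr2
    have hrd : r < d := by omega
    set θ : ℝ := Real.pi * r / d with hθ
    have hθ0 : 0 < θ := by
      apply div_pos (mul_pos Real.pi_pos (by exact_mod_cast hr1))
        (by exact_mod_cast (by omega : 0 < d))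
    have hθπ : θ < Real.pi := by
      rw [hθ, div_lt_iff₀ (by exact_mod_cast (by omega : 0 < d))]
      have : (r:ℝ) < (d:ℝ) := by exact_mod_cast hrd
      nlinarith [Real.pi_pos]
    have hsin : 0 < Real.sin θ := Real.sin_pos_of_pos_of_lt_pi hθ0 hθπ
    have hsC : Complex.sin ((θ:ℝ):ℂ) ≠ 0 := by
      rw [← Complex.ofReal_sin]
      exact Complex.ofReal_ne_zero.mpr (ne_of_gt hsin)
    set z : ℂ := Complex.exp (-(2 * (Real.pi : ℂ) * Complex.I * r) / d) with hzdef
    set u : ℂ := Complex.exp (((θ:ℝ):ℂ) * Complex.I) with hudef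
    have hu0 : u ≠ 0 := Complex.exp_ne_zero _
    have e1 : u * u⁻¹ = 1 := mul_inv_cancel₀ hu0
    have h := hβ r
    have hterm : ∀ n ∈ Finset.range d,
        ((lam n : ℂ)) ^ 2 * Complex.exp (-(2 * (Real.pi : ℂ) * Complex.I * r * n) / d)
          = ((lam n : ℂ)) ^ 2 * z ^ n := by
      intro n _
      rw [hzdef, ← Complex.exp_nat_mul]
      congr 2
      ring
    rw [Finset.sum_congr rfl hterm] at h
    have hzd : z ^ d = 1 := by
      rw [hzdef, ← Complex.exp_nat_mul]
      rw [show (d:ℂ) * (-(2 * (Real.pi : ℂ) * Complex.I * r) / d)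
          = ((-(r:ℤ) : ℤ) : ℂ) * (2 * (Real.pi:ℂ) * Complex.I) from by
        push_cast; field_simp]
      exact Complex.exp_int_mul_two_pi_mul_I _
    have hzu : z = u⁻¹ ^ 2 := by
      rw [hzdef, show (-(2 * (Real.pi : ℂ) * Complex.I * r) / d)
          = (-(((θ:ℝ):ℂ) * Complex.I)) + (-(((θ:ℝ):ℂ) * Complex.I)) from by
        rw [hθ]; push_cast; field_simp; ring]
      rw [Complex.exp_add, Complex.exp_neg, ← hudef, sq]
    have huE : u = Complex.cos ((θ:ℝ):ℂ) + Complex.sin ((θ:ℝ):ℂ) * Complex.I := by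
      rw [hudef, Complex.exp_mul_I]
    have huI : u⁻¹ = Complex.cos ((θ:ℝ):ℂ) - Complex.sin ((θ:ℝ):ℂ) * Complex.I := by
      rw [hudef, ← Complex.exp_neg,
        show (-(((θ:ℝ):ℂ) * Complex.I)) = (-((θ:ℝ):ℂ)) * Complex.I from by ring,
        Complex.exp_mul_I, Complex.cos_neg, Complex.sin_neg]
      ring
    have hC : Complex.cos ((θ:ℝ):ℂ) = (u + u⁻¹) / 2 := by
      linear_combination (-1/2 : ℂ) * huE + (-1/2 : ℂ) * huI
    have hS : Complex.sin ((θ:ℝ):ℂ) * Complex.I = (u - u⁻¹) / 2 := by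
      linear_combination (-1/2 : ℂ) * huE + (1/2 : ℂ) * huI
    have hS2 : (Complex.sin ((θ:ℝ):ℂ))^2 = -(((u - u⁻¹) / 2)^2) := by
      rw [← hS]; linear_combination (Complex.sin ((θ:ℝ):ℂ))^2 * Complex.I_sq
    have hdne : u - u⁻¹ ≠ 0 := by
      intro hcontra
      apply hsC
      have h' : Complex.sin ((θ:ℝ):ℂ) * Complex.I = 0 := by rw [hS, hcontra]; ring
      rcases mul_eq_zero.mp h' with h'' | h''
      · exact h''
      · exact absurd h'' Complex.I_ne_zero
    have hz1 : z - 1 ≠ 0 := by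
      intro hcontra
      apply hdne
      have e2 : u⁻¹ ^ 2 = 1 := by rw [← hzu]; linear_combination hcontra
      linear_combination u⁻¹ * e1 + (-u) * e2
    have hu21 : u^2 - 1 ≠ 0 := by
      intro hc; apply hdne; linear_combination u⁻¹ * hc - u * e1
    have hT0 : ∑ n ∈ Finset.range d, z ^ n = 0 := by
      have hg := geom_sum_mul z d
      rw [hzd, sub_self] at hg
      exact (mul_eq_zero.mp hg).resolve_right hz1
    have h1 := stmt5_aux1 d z
    rw [pow_succ z d, hzd] at h1
    have h2 := stmt5_aux2 d z
    rw [hzd] at h2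
    have expand : ((d:ℂ)-1)^2 * ∑ n ∈ Finset.range d, ((lam n:ℂ))^2 * z^n
        = (-((d:ℂ)-1)*(φmax:ℂ))^2 * (∑ n ∈ Finset.range d, z^n)
          + 2*(-((d:ℂ)-1)*(φmax:ℂ))*(2*(φmax:ℂ)) * (∑ n ∈ Finset.range d, (n:ℂ)*z^n)
          + (2*(φmax:ℂ))^2 * (∑ n ∈ Finset.range d, (n:ℂ)^2*z^n) := by
      rw [Finset.mul_sum, Finset.mul_sum, Finset.mul_sum, Finset.mul_sum,
        ← Finset.sum_add_distrib, ← Finset.sum_add_distrib]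
      refine Finset.sum_congr rfl fun n _ => ?_
      linear_combination (z^n * (((d:ℂ)-1)*((lam n:ℂ))
        + (-((d:ℂ)-1)*(φmax:ℂ) + 2*(φmax:ℂ)*(n:ℂ)))) * hlc n
    have hK : ((d:ℂ)-1)^2 * ((z-1)^3 * ∑ n ∈ Finset.range d, ((lam n:ℂ))^2 * z^n)
        = (d:ℂ) * (4*(φmax:ℂ)^2) * (1 - z^2) := by
      rw [show ((d:ℂ)-1)^2 * ((z-1)^3 * ∑ n ∈ Finset.range d, ((lam n:ℂ))^2 * z^n)
          = (z-1)^3 * (((d:ℂ)-1)^2 * ∑ n ∈ Finset.range d, ((lam n:ℂ))^2 * z^n) from by ring,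
        expand]
      linear_combination ((-((d:ℂ)-1)*(φmax:ℂ))^2*(z-1)^3) * hT0
        + (2*(-((d:ℂ)-1)*(φmax:ℂ))*(2*(φmax:ℂ))*(z-1)) * h1
        + ((2*(φmax:ℂ))^2) * h2
    have hβv : β r = (d:ℂ)*(4*(φmax:ℂ)^2)*(1-z^2) / (((d:ℂ)-1)^2 * ((z-1)^3 * (d:ℂ))) := by
      rw [h, eq_div_iff (mul_ne_zero (pow_ne_zero 2 hd1) (mul_ne_zero (pow_ne_zero 3 hz1) hd0))]
      field_simp
      linear_combination hK
    have hz1' : u⁻¹^2 - 1 ≠ 0 := by rw [← hzu]; exact hz1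
    rw [hβv]
    rw [show Complex.exp ((Real.pi : ℂ) * Complex.I * r / d) = u from by
      rw [hudef]; congr 1; rw [hθ]; push_cast; ring]
    rw [show ((2 * φmax ^ 2 / ((d : ℝ) - 1) ^ 2 : ℝ) : ℂ)
        = 2*(φmax:ℂ)^2/((d:ℂ)-1)^2 from by push_cast; ring]
    rw [show ((Real.cos θ / (Real.sin θ) ^ 2 : ℝ) : ℂ)
        = Complex.cos ((θ:ℝ):ℂ) / (Complex.sin ((θ:ℝ):ℂ))^2 from by push_cast; ring]
    rw [hC, hS2, hzu]
    exact stmt5_algfinal (d:ℂ) ((φmax:ℂ)^2) u hd0 hu0 hd1 hz1' hdne hu21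
end
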